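/- Let d ≥ 1, p ∈ (1, ∞), r ≥ 0 and θ̃ > 0. Let M(dx) = c·(1 + |x|)^{−(pr+d+1)} dx be the probability measure on ℝ^d obtained by normalization (c > 0), and let γ_d denote the standard Gaussian measure on ℝ^d (density (2π)^{−d/2} e^{−|y|²/2}). Define c̃_p^p := (∫₀^∞ (max(t,1))^{(pr+d+1)/2} · t^{−1/2} √(θ̃/π) e^{−θ̃t} dt) · (∫_{ℝ^d} (1 + |y|)^{pr+d+1} γ_d(dy)); then c̃_p < ∞. Moreover, for every measurable w : ℝ^d → ℝ^m satisfying ‖w(x)‖ ≤ C_w·(1 + |x|^r) for some C_w ≥ 0 and all x, one has ∫_{ℝ^d} [∫₀^∞ ∫_{ℝ^d} ‖w(x + √t · y)‖^p γ_d(dy) · √(θ̃/(πt)) e^{−θ̃t} dt] M(dx) ≤ c̃_p^p · ∫_{ℝ^d} ‖w(x)‖^p M(dx) < ∞. (When X^x_t = x + W_t is a Brownian motion started at x and Ẽ ~ Γ(1/2, θ̃) is independent of W, the inner double integral equals E[‖w(X^x_{Ẽ})‖^p], so this is the L^p-stability condition used for the contraction with constant c̃_p.) -/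

import Mathlib

open MeasureTheory
open scoped ENNReal

lemma aux_partA (q θ' : ℝ) (hq0 : 0 < q) (hθ' : 0 < θ') :
    (∫⁻ t in Set.Ioi (0 : ℝ),
        ENNReal.ofReal ((max t 1) ^ (q / 2) *
          (t ^ (-(1 : ℝ) / 2) * Real.sqrt (θ' / Real.pi) * Real.exp (-θ' * t)))) < ⊤ := by
  have hs0 : (0:ℝ) ≤ Real.sqrt (θ' / Real.pi) := Real.sqrt_nonneg _
  have hsplit : Set.Ioi (0:ℝ) = Set.Ioc 0 1 ∪ Set.Ioi 1 :=
    (Set.Ioc_union_Ioi_eq_Ioi zero_le_one).symm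
  rw [hsplit, lintegral_union measurableSet_Ioi (Set.Ioc_disjoint_Ioi le_rfl)]
  have h1 : (∫⁻ t in Set.Ioc (0:ℝ) 1,
      ENNReal.ofReal ((max t 1) ^ (q / 2) *
        (t ^ (-(1 : ℝ) / 2) * Real.sqrt (θ' / Real.pi) * Real.exp (-θ' * t)))) < ⊤ := by
    have hbd : ∀ᵐ t ∂(volume.restrict (Set.Ioc (0:ℝ) 1)),
        ENNReal.ofReal ((max t 1) ^ (q / 2) *
          (t ^ (-(1 : ℝ) / 2) * Real.sqrt (θ' / Real.pi) * Real.exp (-θ' * t)))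
        ≤ ENNReal.ofReal (Real.sqrt (θ' / Real.pi) * t ^ (-(1:ℝ)/2)) := by
      filter_upwards [ae_restrict_mem measurableSet_Ioc] with t ht
      apply ENNReal.ofReal_le_ofReal
      rw [max_eq_right ht.2]
      have he : Real.exp (-θ' * t) ≤ 1 := by
        rw [Real.exp_le_one_iff]
        nlinarith [ht.1]
      have htp : (0:ℝ) ≤ t ^ (-(1:ℝ)/2) := Real.rpow_nonneg ht.1.le _
      rw [Real.one_rpow, one_mul]
      calc t ^ (-(1:ℝ)/2) * Real.sqrt (θ' / Real.pi) * Real.exp (-θ' * t)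
          ≤ t ^ (-(1:ℝ)/2) * Real.sqrt (θ' / Real.pi) * 1 := by
            apply mul_le_mul_of_nonneg_left he (by positivity)
        _ = Real.sqrt (θ' / Real.pi) * t ^ (-(1:ℝ)/2) := by ring
    have hint : IntegrableOn (fun t : ℝ => Real.sqrt (θ' / Real.pi) * t ^ (-(1:ℝ)/2))
        (Set.Ioc (0:ℝ) 1) := by
      apply Integrable.const_mul
      have h2 : IntegrableOn (fun t : ℝ => t ^ (-(1:ℝ)/2)) (Set.Ioo (0:ℝ) 2) :=
        (intervalIntegral.integrableOn_Ioo_rpow_iff two_pos).mpr (by norm_num)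
      exact h2.mono_set (fun t ht => ⟨ht.1, lt_of_le_of_lt ht.2 one_lt_two⟩)
    exact lt_of_le_of_lt (lintegral_mono_ae hbd) hint.setLIntegral_lt_top
  have h2 : (∫⁻ t in Set.Ioi (1:ℝ),
      ENNReal.ofReal ((max t 1) ^ (q / 2) *
        (t ^ (-(1 : ℝ) / 2) * Real.sqrt (θ' / Real.pi) * Real.exp (-θ' * t)))) < ⊤ := by
    set K : ℝ := Real.exp (q/2 * Real.log (q/θ')) with hK
    have hbd : ∀ᵐ t ∂(volume.restrict (Set.Ioi (1:ℝ))),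
        ENNReal.ofReal ((max t 1) ^ (q / 2) *
          (t ^ (-(1 : ℝ) / 2) * Real.sqrt (θ' / Real.pi) * Real.exp (-θ' * t)))
        ≤ ENNReal.ofReal ((Real.sqrt (θ' / Real.pi) * K) * Real.exp (-(θ'/2) * t)) := by
      filter_upwards [ae_restrict_mem measurableSet_Ioi] with t ht
      have ht1 : (1:ℝ) < t := ht
      have ht0 : (0:ℝ) < t := lt_trans one_pos ht1
      apply ENNReal.ofReal_le_ofReal
      rw [max_eq_left ht1.le]
      have hcore : t ^ (q/2) * Real.exp (-θ' * t) ≤ K * Real.exp (-(θ'/2) * t) := by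
        have hlog : Real.log t ≤ θ' * t / q + Real.log (q / θ') := by
          have hpos : (0:ℝ) < t * (θ'/q) := by positivity
          have h0 : Real.log (t * (θ'/q)) ≤ t * (θ'/q) - 1 := Real.log_le_sub_one_of_pos hpos
          have h1 : Real.log (t * (θ'/q)) = Real.log t + Real.log (θ'/q) :=
            Real.log_mul ht0.ne' (by positivity)
          have h2 : Real.log (θ'/q) = - Real.log (q/θ') := by
            rw [Real.log_div hθ'.ne' hq0.ne', Real.log_div hq0.ne' hθ'.ne']
            ring
          have h3 : t * (θ'/q) = θ' * t / q := by ring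
          rw [h1, h2, h3] at h0
          linarith
        have hmul := mul_le_mul_of_nonneg_left hlog (by positivity : (0:ℝ) ≤ q/2)
        have hqne : q ≠ 0 := hq0.ne'
        have harg : q/2 * Real.log t + (-θ' * t) ≤ q/2 * Real.log (q/θ') + (-(θ'/2) * t) := by
          have : q/2 * (θ' * t / q) = θ'/2 * t := by field_simp
          nlinarith [hmul]
        calc t ^ (q/2) * Real.exp (-θ' * t)
            = Real.exp (q/2 * Real.log t + (-θ' * t)) := by
              rw [Real.exp_add, Real.rpow_def_of_pos ht0]
              ring_nf
          _ ≤ Real.exp (q/2 * Real.log (q/θ') + (-(θ'/2) * t)) := Real.exp_le_exp.mpr harg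
          _ = K * Real.exp (-(θ'/2) * t) := by rw [Real.exp_add]
      have hhalf : t ^ (-(1:ℝ)/2) ≤ 1 :=
        Real.rpow_le_one_of_one_le_of_nonpos ht1.le (by norm_num)
      calc t ^ (q/2) * (t ^ (-(1:ℝ)/2) * Real.sqrt (θ' / Real.pi) * Real.exp (-θ' * t))
          = (t ^ (q/2) * Real.exp (-θ' * t)) * (t ^ (-(1:ℝ)/2) * Real.sqrt (θ' / Real.pi)) := by
            ring
        _ ≤ (K * Real.exp (-(θ'/2) * t)) * (1 * Real.sqrt (θ' / Real.pi)) := by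
            apply mul_le_mul hcore
            · apply mul_le_mul_of_nonneg_right hhalf hs0
            · positivity
            · positivity
        _ = (Real.sqrt (θ' / Real.pi) * K) * Real.exp (-(θ'/2) * t) := by ring
    have hint : IntegrableOn (fun t : ℝ => (Real.sqrt (θ' / Real.pi) * K) * Real.exp (-(θ'/2) * t))
        (Set.Ioi (1:ℝ)) :=
      (exp_neg_integrableOn_Ioi 1 (half_pos hθ')).const_mul _
    exact lt_of_le_of_lt (lintegral_mono_ae hbd) hint.setLIntegral_lt_top
  exact ENNReal.add_lt_top.mpr ⟨h1, h2⟩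

lemma aux_gauss_int (d : ℕ) :
    Integrable (fun v : EuclideanSpace ℝ (Fin d) => Real.exp (-(1/4:ℝ) * ‖v‖^2)) := by
  have h := (GaussianFourier.integrable_cexp_neg_mul_sq_norm_add (V := EuclideanSpace ℝ (Fin d))
      (b := (1/4 : ℂ)) (by norm_num) 0 0).norm
  refine h.congr (Filter.Eventually.of_forall fun v => ?_)
  show ‖Complex.exp _‖ = _
  rw [Complex.norm_exp]
  congr 1
  simp [Complex.add_re, Complex.mul_re, ← Complex.ofReal_pow]

lemma aux_partB (d : ℕ) (q : ℝ) (hq0 : 0 < q) :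
    (∫⁻ y : EuclideanSpace ℝ (Fin d),
        ENNReal.ofReal ((2 * Real.pi) ^ (-(d : ℝ) / 2) * Real.exp (-‖y‖ ^ 2 / 2)) *
          ENNReal.ofReal ((1 + ‖y‖) ^ q)) < ⊤ := by
  set C : ℝ := (2 * Real.pi) ^ (-(d : ℝ) / 2) with hC
  have hC0 : 0 ≤ C := Real.rpow_nonneg (by positivity) _
  have hbd : ∀ y : EuclideanSpace ℝ (Fin d),
      ENNReal.ofReal (C * Real.exp (-‖y‖ ^ 2 / 2)) * ENNReal.ofReal ((1 + ‖y‖) ^ q)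
        ≤ ENNReal.ofReal ((C * Real.exp (q ^ 2)) * Real.exp (-(1/4:ℝ) * ‖y‖ ^ 2)) := by
    intro y
    rw [← ENNReal.ofReal_mul (by positivity)]
    apply ENNReal.ofReal_le_ofReal
    have h1 : Real.log (1 + ‖y‖) ≤ ‖y‖ := by
      have := Real.log_le_sub_one_of_pos (x := 1 + ‖y‖) (by positivity)
      linarith
    have h2 : Real.log (1 + ‖y‖) * q ≤ q ^ 2 + ‖y‖ ^ 2 / 4 := by
      have h3 : q * Real.log (1 + ‖y‖) ≤ q * ‖y‖ := mul_le_mul_of_nonneg_left h1 hq0.le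
      nlinarith [sq_nonneg (q - ‖y‖/2)]
    calc C * Real.exp (-‖y‖ ^ 2 / 2) * (1 + ‖y‖) ^ q
        = C * Real.exp (-‖y‖ ^ 2 / 2 + Real.log (1 + ‖y‖) * q) := by
          rw [Real.rpow_def_of_pos (by positivity), Real.exp_add]
          ring
      _ ≤ C * Real.exp (-‖y‖ ^ 2 / 2 + (q ^ 2 + ‖y‖ ^ 2 / 4)) := by
          apply mul_le_mul_of_nonneg_left _ hC0
          exact Real.exp_le_exp.mpr (by linarith)
      _ = (C * Real.exp (q ^ 2)) * Real.exp (-(1/4:ℝ) * ‖y‖ ^ 2) := by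
          rw [mul_assoc, ← Real.exp_add]
          ring_nf
  calc (∫⁻ y : EuclideanSpace ℝ (Fin d),
          ENNReal.ofReal (C * Real.exp (-‖y‖ ^ 2 / 2)) * ENNReal.ofReal ((1 + ‖y‖) ^ q))
      ≤ ∫⁻ y : EuclideanSpace ℝ (Fin d),
          ENNReal.ofReal ((C * Real.exp (q ^ 2)) * Real.exp (-(1/4:ℝ) * ‖y‖ ^ 2)) :=
        lintegral_mono hbd
    _ < ⊤ := ((aux_gauss_int d).const_mul _).lintegral_lt_top

lemma aux_rho (θ' t : ℝ) (hθ' : 0 < θ') (ht : 0 < t) :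
    Real.sqrt (θ' / (Real.pi * t)) * Real.exp (-θ' * t)
      = t ^ (-(1:ℝ) / 2) * Real.sqrt (θ' / Real.pi) * Real.exp (-θ' * t) := by
  congr 1
  rw [← div_div, Real.sqrt_div (by positivity : (0:ℝ) ≤ θ' / Real.pi) t, neg_div,
    Real.rpow_neg ht.le, ← Real.sqrt_eq_rpow, div_eq_mul_inv, mul_comm]

lemma aux_K (q : ℝ) (hq0 : 0 ≤ q) (t : ℝ) {d : ℕ} (y : EuclideanSpace ℝ (Fin d)) :
    ((1:ℝ) + ‖Real.sqrt t • y‖) ^ q ≤ (max t 1) ^ (q / 2) * (1 + ‖y‖) ^ q := by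
  have hs0 : (0:ℝ) ≤ Real.sqrt t := Real.sqrt_nonneg t
  have hny : (0:ℝ) ≤ ‖y‖ := norm_nonneg y
  have hnorm : ‖Real.sqrt t • y‖ = Real.sqrt t * ‖y‖ := by
    rw [norm_smul, Real.norm_eq_abs, abs_of_nonneg hs0]
  have hmax : max (Real.sqrt t) 1 = Real.sqrt (max t 1) := by
    rcases le_total t 1 with h | h
    · rw [max_eq_right h, max_eq_right (Real.sqrt_le_one.mpr h), Real.sqrt_one]
    · rw [max_eq_left h, max_eq_left (Real.one_le_sqrt.mpr h)]
  have h1 : 1 + Real.sqrt t * ‖y‖ ≤ max (Real.sqrt t) 1 * (1 + ‖y‖) := by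
    have h2 : Real.sqrt t ≤ max (Real.sqrt t) 1 := le_max_left _ _
    have h3 : (1:ℝ) ≤ max (Real.sqrt t) 1 := le_max_right _ _
    nlinarith
  have hmax0 : (0:ℝ) ≤ max t 1 := le_trans zero_le_one (le_max_right t 1)
  calc ((1:ℝ) + ‖Real.sqrt t • y‖) ^ q
      = (1 + Real.sqrt t * ‖y‖) ^ q := by rw [hnorm]
    _ ≤ (max (Real.sqrt t) 1 * (1 + ‖y‖)) ^ q :=
        Real.rpow_le_rpow (by positivity) h1 hq0
    _ = (max (Real.sqrt t) 1) ^ q * (1 + ‖y‖) ^ q :=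
        Real.mul_rpow (by positivity) (by positivity)
    _ = (max t 1) ^ (q / 2) * (1 + ‖y‖) ^ q := by
        rw [hmax, Real.sqrt_eq_rpow, ← Real.rpow_mul hmax0,
          show (1:ℝ)/2*q = q/2 by ring]

lemma aux_D_bound {d : ℕ} (c q : ℝ) (hc : 0 ≤ c) (hq0 : 0 ≤ q)
    (v z : EuclideanSpace ℝ (Fin d)) :
    ENNReal.ofReal (c * (1 + ‖z - v‖) ^ (-q))
      ≤ ENNReal.ofReal ((1 + ‖v‖) ^ q) * ENNReal.ofReal (c * (1 + ‖z‖) ^ (-q)) := by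
  rw [← ENNReal.ofReal_mul (Real.rpow_nonneg (by positivity) _)]
  apply ENNReal.ofReal_le_ofReal
  have ha : (0:ℝ) < 1 + ‖z - v‖ := by positivity
  have hb : (0:ℝ) < 1 + ‖v‖ := by positivity
  have he : (0:ℝ) < 1 + ‖z‖ := by positivity
  have hz : ‖z‖ ≤ ‖z - v‖ + ‖v‖ := by
    calc ‖z‖ = ‖z - v + v‖ := by rw [sub_add_cancel]
      _ ≤ ‖z - v‖ + ‖v‖ := norm_add_le _ _
  have hee : 1 + ‖z‖ ≤ (1 + ‖z - v‖) * (1 + ‖v‖) := by nlinarith [norm_nonneg (z - v), norm_nonneg v]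
  have hpow : (1 + ‖z‖) ^ q ≤ (1 + ‖z - v‖) ^ q * (1 + ‖v‖) ^ q := by
    rw [← Real.mul_rpow ha.le hb.le]
    exact Real.rpow_le_rpow he.le hee hq0
  have hap : (0:ℝ) < (1 + ‖z - v‖) ^ q := Real.rpow_pos_of_pos ha q
  have hep : (0:ℝ) < (1 + ‖z‖) ^ q := Real.rpow_pos_of_pos he q
  have hbp : (0:ℝ) < (1 + ‖v‖) ^ q := Real.rpow_pos_of_pos hb q
  rw [Real.rpow_neg ha.le, Real.rpow_neg he.le]
  have h2 : ((1 + ‖z - v‖) ^ q)⁻¹ ≤ (1 + ‖v‖) ^ q * ((1 + ‖z‖) ^ q)⁻¹ := by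
    rw [← one_div, ← div_eq_mul_inv, div_le_div_iff₀ hap hep, one_mul]
    nlinarith
  calc c * ((1 + ‖z - v‖) ^ q)⁻¹ ≤ c * ((1 + ‖v‖) ^ q * ((1 + ‖z‖) ^ q)⁻¹) :=
        mul_le_mul_of_nonneg_left h2 hc
    _ = (1 + ‖v‖) ^ q * (c * ((1 + ‖z‖) ^ q)⁻¹) := by ring

/-- `L^p`-stability with respect to the weighted probability measure
`M(dx) = c (1+|x|)^{−(pr+d+1)} dx` of the Gamma-randomized Brownian shift:
with `γ_d` the standard Gaussian on `ℝ^d` and `Ẽ ~ Γ(1/2, θ̃)` (density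
`√(θ̃/π) t^{−1/2} e^{−θ̃t}`) independent of the Brownian motion,
`E[‖w(x + W_Ẽ)‖^p] = ∫₀^∞ ∫ ‖w(x + √t y)‖^p γ_d(dy) √(θ̃/(πt)) e^{−θ̃t} dt`, and
`∫ E[‖w(X^x_Ẽ)‖^p] M(dx) ≤ c̃_p^p ∫ ‖w(x)‖^p M(dx) < ∞`, with
`c̃_p^p = (∫₀^∞ (max(t,1))^{(pr+d+1)/2} t^{−1/2} √(θ̃/π) e^{−θ̃t} dt)
          (∫ (1+|y|)^{pr+d+1} γ_d(dy)) < ∞`. -/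
theorem lp_stability_gamma_time
    (d : ℕ) (hd : 1 ≤ d) (p r θ' : ℝ) (hp : 1 < p) (hr : 0 ≤ r) (hθ' : 0 < θ')
    (c : ℝ) (hc : 0 < c)
    (M : Measure (EuclideanSpace ℝ (Fin d)))
    (hM : M = volume.withDensity
      (fun x => ENNReal.ofReal (c * (1 + ‖x‖) ^ (-(p * r + d + 1)))))
    (hMprob : IsProbabilityMeasure M)
    (γ : Measure (EuclideanSpace ℝ (Fin d)))
    (hγ : γ = volume.withDensity
      (fun y => ENNReal.ofReal ((2 * Real.pi) ^ (-(d : ℝ) / 2) * Real.exp (-‖y‖ ^ 2 / 2))))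
    (m : ℕ) (w : EuclideanSpace ℝ (Fin d) → EuclideanSpace ℝ (Fin m))
    (hw : Measurable w)
    (Cw : ℝ) (hCw : 0 ≤ Cw) (hgrowth : ∀ x, ‖w x‖ ≤ Cw * (1 + ‖x‖ ^ r)) :
    (∫⁻ t in Set.Ioi (0 : ℝ),
        ENNReal.ofReal ((max t 1) ^ ((p * r + d + 1) / 2) *
          (t ^ (-(1 : ℝ) / 2) * Real.sqrt (θ' / Real.pi) * Real.exp (-θ' * t))) < ⊤) ∧
    (∫⁻ y, ENNReal.ofReal ((1 + ‖y‖) ^ (p * r + d + 1)) ∂γ < ⊤) ∧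
    (∫⁻ x, ENNReal.ofReal (‖w x‖ ^ p) ∂M < ⊤) ∧
    (∫⁻ x, (∫⁻ t in Set.Ioi (0 : ℝ),
          (∫⁻ y, ENNReal.ofReal (‖w (x + Real.sqrt t • y)‖ ^ p) ∂γ) *
            ENNReal.ofReal (Real.sqrt (θ' / (Real.pi * t)) * Real.exp (-θ' * t))) ∂M
        ≤ (∫⁻ t in Set.Ioi (0 : ℝ),
            ENNReal.ofReal ((max t 1) ^ ((p * r + d + 1) / 2) *
              (t ^ (-(1 : ℝ) / 2) * Real.sqrt (θ' / Real.pi) * Real.exp (-θ' * t)))) *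
          (∫⁻ y, ENNReal.ofReal ((1 + ‖y‖) ^ (p * r + d + 1)) ∂γ) *
          (∫⁻ x, ENNReal.ofReal (‖w x‖ ^ p) ∂M)) := by
  have hp0 : (0:ℝ) < p := lt_trans one_pos hp
  have hd1 : (1:ℝ) ≤ (d:ℝ) := by exact_mod_cast hd
  have hpr : (0:ℝ) ≤ p * r := mul_nonneg hp0.le hr
  set q : ℝ := p * r + d + 1 with hqdef
  have hq0 : (0:ℝ) < q := by rw [hqdef]; linarith
  set Df : EuclideanSpace ℝ (Fin d) → ℝ≥0∞ :=
    fun x => ENNReal.ofReal (c * (1 + ‖x‖) ^ (-q)) with hDf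
  set Gf : EuclideanSpace ℝ (Fin d) → ℝ≥0∞ :=
    fun y => ENNReal.ofReal ((2 * Real.pi) ^ (-(d : ℝ) / 2) * Real.exp (-‖y‖ ^ 2 / 2)) with hGf
  set gf : EuclideanSpace ℝ (Fin d) → ℝ≥0∞ :=
    fun z => ENNReal.ofReal (‖w z‖ ^ p) with hgf
  set ρf : ℝ → ℝ≥0∞ :=
    fun t => ENNReal.ofReal (Real.sqrt (θ' / (Real.pi * t)) * Real.exp (-θ' * t)) with hρf
  -- measurability
  have hgm : Measurable gf := by
    rw [hgf]
    exact ((continuous_id.rpow_const fun x => Or.inr hp0.le).measurable.comp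
      hw.norm).ennreal_ofReal
  have hDm : Measurable Df := by
    rw [hDf]
    exact ((continuous_const.mul ((continuous_const.add continuous_norm).rpow_const
      (fun x => Or.inl (ne_of_gt (add_pos_of_pos_of_nonneg one_pos (norm_nonneg _)))))).measurable).ennreal_ofReal
  have hGm : Measurable Gf := by
    rw [hGf]
    exact ((continuous_const.mul ((continuous_norm.pow 2).neg.div_const 2).rexp).measurable).ennreal_ofReal
  have hρm : Measurable ρf := by
    rw [hρf]
    apply Measurable.ennreal_ofReal
    apply Measurable.mul
    · exact Real.continuous_sqrt.measurable.comp
        (measurable_const.div (measurable_const.mul measurable_id))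
    · exact (Real.continuous_exp.comp (continuous_const.mul continuous_id)).measurable
  have hbm : Measurable fun y : EuclideanSpace ℝ (Fin d) => ENNReal.ofReal ((1 + ‖y‖) ^ q) :=
    (((continuous_const.add continuous_norm).rpow_const
      (fun x => Or.inl (ne_of_gt (add_pos_of_pos_of_nonneg one_pos (norm_nonneg _))))).measurable).ennreal_ofReal
  have hshift : Measurable fun pp : (EuclideanSpace ℝ (Fin d) × ℝ) × EuclideanSpace ℝ (Fin d) =>
      pp.1.1 + Real.sqrt pp.1.2 • pp.2 :=
    measurable_fst.fst.add
      ((Real.continuous_sqrt.measurable.comp measurable_fst.snd).smul measurable_snd)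
  have hshift2 : Measurable fun pp : EuclideanSpace ℝ (Fin d) × ℝ × EuclideanSpace ℝ (Fin d) =>
      pp.1 + Real.sqrt pp.2.1 • pp.2.2 :=
    measurable_fst.add
      ((Real.continuous_sqrt.measurable.comp measurable_snd.fst).smul measurable_snd.snd)
  have hGintm : Measurable fun pxt : EuclideanSpace ℝ (Fin d) × ℝ =>
      ∫⁻ y, Gf y * gf (pxt.1 + Real.sqrt pxt.2 • y) :=
    Measurable.lintegral_prod_right' ((hGm.comp measurable_snd).mul (hgm.comp hshift))
  have hF'm : Measurable fun x : EuclideanSpace ℝ (Fin d) => ∫⁻ t in Set.Ioi (0:ℝ),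
      (∫⁻ y, Gf y * gf (x + Real.sqrt t • y)) * ρf t :=
    Measurable.lintegral_prod_right' (hGintm.mul (hρm.comp measurable_snd))
  have hΦm : Measurable fun pp : EuclideanSpace ℝ (Fin d) × ℝ × EuclideanSpace ℝ (Fin d) =>
      (Df pp.1 * ρf pp.2.1) * (Gf pp.2.2 * gf (pp.1 + Real.sqrt pp.2.1 • pp.2.2)) :=
    ((hDm.comp measurable_fst).mul (hρm.comp measurable_snd.fst)).mul
      ((hGm.comp measurable_snd.snd).mul (hgm.comp hshift2))
  -- basic rewrites
  have hM_lint : ∀ F : EuclideanSpace ℝ (Fin d) → ℝ≥0∞, Measurable F →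
      ∫⁻ x, F x ∂M = ∫⁻ x, Df x * F x := by
    intro F hF
    rw [hM, lintegral_withDensity_eq_lintegral_mul volume hDm hF]
    rfl
  have hγint : ∀ (x : EuclideanSpace ℝ (Fin d)) (t : ℝ),
      (∫⁻ y, gf (x + Real.sqrt t • y) ∂γ) = ∫⁻ y, Gf y * gf (x + Real.sqrt t • y) := by
    intro x t
    have haff : Measurable fun y : EuclideanSpace ℝ (Fin d) => x + Real.sqrt t • y := by
      have h0 : Measurable fun y : EuclideanSpace ℝ (Fin d) => Real.sqrt t • y :=
        (continuous_const_smul _).measurable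
      exact measurable_const.add h0
    have hcomp : Measurable fun y : EuclideanSpace ℝ (Fin d) => gf (x + Real.sqrt t • y) :=
      hgm.comp haff
    rw [hγ, lintegral_withDensity_eq_lintegral_mul volume hGm hcomp]
    rfl
  have hBeq : (∫⁻ y, ENNReal.ofReal ((1 + ‖y‖) ^ q) ∂γ)
      = ∫⁻ y, Gf y * ENNReal.ofReal ((1 + ‖y‖) ^ q) := by
    rw [hγ, lintegral_withDensity_eq_lintegral_mul volume hGm hbm]
    rfl
  set N : ℝ≥0∞ := ∫⁻ x, Df x * gf x with hNdef
  have hIeq : ∫⁻ x, gf x ∂M = N := hM_lint gf hgm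
  -- Part 2
  have hB : (∫⁻ y, ENNReal.ofReal ((1 + ‖y‖) ^ q) ∂γ) < ⊤ := by
    rw [hBeq]
    exact aux_partB d q hq0
  -- Part 3
  have hIlt : (∫⁻ x, gf x ∂M) < ⊤ := by
    rw [hIeq, hNdef]
    have hpt : ∀ x : EuclideanSpace ℝ (Fin d), Df x * gf x ≤
        ENNReal.ofReal ((c * (2 * Cw) ^ p) * (1 + ‖x‖) ^ (-((d:ℝ) + 1))) := by
      intro x
      have hx1 : (0:ℝ) < 1 + ‖x‖ := by positivity
      show ENNReal.ofReal (c * (1 + ‖x‖) ^ (-q)) * ENNReal.ofReal (‖w x‖ ^ p) ≤ _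
      rw [← ENNReal.ofReal_mul (by positivity)]
      apply ENNReal.ofReal_le_ofReal
      have h1 : ‖w x‖ ^ p ≤ (2 * Cw) ^ p * (1 + ‖x‖) ^ (r * p) := by
        have ha : ‖w x‖ ^ p ≤ (Cw * (1 + ‖x‖ ^ r)) ^ p :=
          Real.rpow_le_rpow (norm_nonneg _) (hgrowth x) hp0.le
        have hb1 : ‖x‖ ^ r ≤ (1 + ‖x‖) ^ r :=
          Real.rpow_le_rpow (norm_nonneg _) (by linarith [norm_nonneg x]) hr
        have hb2 : (1:ℝ) ≤ (1 + ‖x‖) ^ r := by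
          calc (1:ℝ) = 1 ^ r := (Real.one_rpow r).symm
            _ ≤ (1 + ‖x‖) ^ r :=
              Real.rpow_le_rpow zero_le_one (by linarith [norm_nonneg x]) hr
        have hb : Cw * (1 + ‖x‖ ^ r) ≤ 2 * Cw * (1 + ‖x‖) ^ r := by nlinarith
        have hc2 : (Cw * (1 + ‖x‖ ^ r)) ^ p ≤ (2 * Cw * (1 + ‖x‖) ^ r) ^ p := by
          apply Real.rpow_le_rpow _ hb hp0.le
          have : (0:ℝ) ≤ ‖x‖ ^ r := Real.rpow_nonneg (norm_nonneg x) r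
          positivity
        have hd2 : (2 * Cw * (1 + ‖x‖) ^ r) ^ p = (2 * Cw) ^ p * (1 + ‖x‖) ^ (r * p) := by
          rw [Real.mul_rpow (by positivity) (Real.rpow_nonneg hx1.le r),
            ← Real.rpow_mul hx1.le]
        linarith [ha.trans hc2, hd2.le, hd2.ge]
      calc c * (1 + ‖x‖) ^ (-q) * (‖w x‖ ^ p)
          ≤ c * (1 + ‖x‖) ^ (-q) * ((2 * Cw) ^ p * (1 + ‖x‖) ^ (r * p)) := by
            apply mul_le_mul_of_nonneg_left h1
            have : (0:ℝ) ≤ (1 + ‖x‖) ^ (-q) := Real.rpow_nonneg hx1.le _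
            positivity
        _ = (c * (2 * Cw) ^ p) * (1 + ‖x‖) ^ (-((d:ℝ) + 1)) := by
            rw [show -((d:ℝ) + 1) = -q + r * p by rw [hqdef]; ring, Real.rpow_add hx1]
            ring
    have hfin : Integrable
        (fun x : EuclideanSpace ℝ (Fin d) => (c * (2 * Cw) ^ p) * (1 + ‖x‖) ^ (-((d:ℝ) + 1))) := by
      apply Integrable.const_mul
      apply integrable_one_add_norm
      rw [finrank_euclideanSpace_fin]
      linarith
    exact lt_of_le_of_lt (lintegral_mono hpt) hfin.lintegral_lt_top
  have hNlt : N < ⊤ := by rw [← hIeq]; exact hIlt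
  -- translation bound
  have htrans : ∀ v : EuclideanSpace ℝ (Fin d),
      (∫⁻ z, Df z * gf (z + v)) ≤ ENNReal.ofReal ((1 + ‖v‖) ^ q) * N := by
    intro v
    have h1 : (∫⁻ z, Df z * gf (z + v)) = ∫⁻ z, Df (z - v) * gf z := by
      have h2 := lintegral_add_right_eq_self
        (μ := (volume : Measure (EuclideanSpace ℝ (Fin d))))
        (fun z => Df (z - v) * gf z) v
      calc (∫⁻ z, Df z * gf (z + v)) = ∫⁻ z, Df (z + v - v) * gf (z + v) := by
            simp only [add_sub_cancel_right]
        _ = ∫⁻ z, Df (z - v) * gf z := h2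
    rw [h1]
    calc (∫⁻ z, Df (z - v) * gf z)
        ≤ ∫⁻ z, ENNReal.ofReal ((1 + ‖v‖) ^ q) * (Df z * gf z) := by
          apply lintegral_mono fun z => ?_
          rw [← mul_assoc]
          exact mul_le_mul_left (aux_D_bound c q hc.le hq0.le v z) _
      _ = ENNReal.ofReal ((1 + ‖v‖) ^ q) * N :=
          lintegral_const_mul' _ _ ENNReal.ofReal_ne_top
  -- bound for fixed (t, y)
  have hx_bound : ∀ (t : ℝ) (y : EuclideanSpace ℝ (Fin d)),
      (∫⁻ x, (Df x * ρf t) * (Gf y * gf (x + Real.sqrt t • y)))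
        ≤ (ρf t * ENNReal.ofReal ((max t 1) ^ (q / 2))) *
            (Gf y * ENNReal.ofReal ((1 + ‖y‖) ^ q)) * N := by
    intro t y
    have hnetop : ρf t * Gf y ≠ ⊤ :=
      ENNReal.mul_ne_top ENNReal.ofReal_ne_top ENNReal.ofReal_ne_top
    have h1 : (∫⁻ x, (Df x * ρf t) * (Gf y * gf (x + Real.sqrt t • y)))
        = (ρf t * Gf y) * ∫⁻ x, Df x * gf (x + Real.sqrt t • y) := by
      rw [← lintegral_const_mul' (ρf t * Gf y) _ hnetop]
      exact lintegral_congr fun x => by ring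
    rw [h1]
    calc (ρf t * Gf y) * ∫⁻ x, Df x * gf (x + Real.sqrt t • y)
        ≤ (ρf t * Gf y) * (ENNReal.ofReal ((1 + ‖Real.sqrt t • y‖) ^ q) * N) :=
          mul_le_mul_right (htrans (Real.sqrt t • y)) _
      _ ≤ (ρf t * Gf y) * (ENNReal.ofReal ((max t 1) ^ (q / 2) * (1 + ‖y‖) ^ q) * N) := by
          apply mul_le_mul_right
          exact mul_le_mul_left (ENNReal.ofReal_le_ofReal (aux_K q hq0.le t y)) _
      _ = (ρf t * ENNReal.ofReal ((max t 1) ^ (q / 2))) *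
            (Gf y * ENNReal.ofReal ((1 + ‖y‖) ^ q)) * N := by
          rw [ENNReal.ofReal_mul
            (Real.rpow_nonneg (le_trans zero_le_one (le_max_right t 1)) _)]
          ring
  -- the A-factor rewrite
  have hAeq : (∫⁻ t in Set.Ioi (0:ℝ), ρf t * ENNReal.ofReal ((max t 1) ^ (q / 2)))
      = ∫⁻ t in Set.Ioi (0:ℝ), ENNReal.ofReal ((max t 1) ^ (q / 2) *
          (t ^ (-(1 : ℝ) / 2) * Real.sqrt (θ' / Real.pi) * Real.exp (-θ' * t))) := by
    apply setLIntegral_congr_fun measurableSet_Ioi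
    intro t ht
    have ht0 : (0:ℝ) < t := ht
    have hρeq : ρf t = ENNReal.ofReal
        (t ^ (-(1 : ℝ) / 2) * Real.sqrt (θ' / Real.pi) * Real.exp (-θ' * t)) := by
      rw [hρf]
      simp only
      rw [aux_rho θ' t hθ' ht0]
    beta_reduce
    rw [hρeq, ← ENNReal.ofReal_mul (by
      have h1 : (0:ℝ) ≤ t ^ (-(1:ℝ)/2) := Real.rpow_nonneg ht0.le _
      positivity), mul_comm]
  refine ⟨aux_partA q θ' hq0 hθ', hB, hIlt, ?_⟩
  show (∫⁻ x, (∫⁻ t in Set.Ioi (0:ℝ), (∫⁻ y, gf (x + Real.sqrt t • y) ∂γ) * ρf t) ∂M)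
      ≤ (∫⁻ t in Set.Ioi (0:ℝ), ENNReal.ofReal ((max t 1) ^ (q / 2) *
          (t ^ (-(1 : ℝ) / 2) * Real.sqrt (θ' / Real.pi) * Real.exp (-θ' * t)))) *
        (∫⁻ y, ENNReal.ofReal ((1 + ‖y‖) ^ q) ∂γ) * (∫⁻ x, gf x ∂M)
  have haem1 : AEMeasurable (fun t : ℝ => ρf t * ENNReal.ofReal ((max t 1) ^ (q / 2)))
      (volume.restrict (Set.Ioi (0:ℝ))) := by
    apply Measurable.aemeasurable
    apply hρm.mul
    apply Measurable.ennreal_ofReal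
    apply Continuous.measurable
    apply Continuous.rpow_const (continuous_id.max continuous_const)
    intro x
    exact Or.inl (ne_of_gt (lt_of_lt_of_le one_pos (le_max_right x 1)))
  have haem2 : AEMeasurable
      (fun y : EuclideanSpace ℝ (Fin d) => Gf y * ENNReal.ofReal ((1 + ‖y‖) ^ q))
      (volume : Measure (EuclideanSpace ℝ (Fin d))) := (hGm.mul hbm).aemeasurable
  calc (∫⁻ x, (∫⁻ t in Set.Ioi (0:ℝ), (∫⁻ y, gf (x + Real.sqrt t • y) ∂γ) * ρf t) ∂M)
      = ∫⁻ x, (∫⁻ t in Set.Ioi (0:ℝ),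
          (∫⁻ y, Gf y * gf (x + Real.sqrt t • y)) * ρf t) ∂M :=
        lintegral_congr fun x => lintegral_congr fun t => by rw [hγint x t]
    _ = ∫⁻ x, Df x * (∫⁻ t in Set.Ioi (0:ℝ),
          (∫⁻ y, Gf y * gf (x + Real.sqrt t • y)) * ρf t) := hM_lint _ hF'm
    _ = ∫⁻ x, ∫⁻ t in Set.Ioi (0:ℝ), ∫⁻ y,
          (Df x * ρf t) * (Gf y * gf (x + Real.sqrt t • y)) := by
        apply lintegral_congr fun x => ?_
        rw [← lintegral_const_mul' (Df x) _ ENNReal.ofReal_ne_top]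
        apply lintegral_congr fun t => ?_
        rw [lintegral_const_mul' (Df x * ρf t) _
          (ENNReal.mul_ne_top ENNReal.ofReal_ne_top ENNReal.ofReal_ne_top)]
        ring
    _ = ∫⁻ x, ∫⁻ z : ℝ × EuclideanSpace ℝ (Fin d),
          (Df x * ρf z.1) * (Gf z.2 * gf (x + Real.sqrt z.1 • z.2))
          ∂((volume.restrict (Set.Ioi (0:ℝ))).prod volume) :=
        lintegral_congr fun x =>
          (lintegral_prod _ ((hΦm.comp measurable_prodMk_left).aemeasurable)).symm
    _ = ∫⁻ z : ℝ × EuclideanSpace ℝ (Fin d), (∫⁻ x,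
          (Df x * ρf z.1) * (Gf z.2 * gf (x + Real.sqrt z.1 • z.2)))
          ∂((volume.restrict (Set.Ioi (0:ℝ))).prod volume) :=
        lintegral_lintegral_swap hΦm.aemeasurable
    _ ≤ ∫⁻ z : ℝ × EuclideanSpace ℝ (Fin d),
          ((ρf z.1 * ENNReal.ofReal ((max z.1 1) ^ (q / 2))) *
            (Gf z.2 * ENNReal.ofReal ((1 + ‖z.2‖) ^ q))) * N
          ∂((volume.restrict (Set.Ioi (0:ℝ))).prod volume) :=
        lintegral_mono fun z => hx_bound z.1 z.2
    _ = (∫⁻ z : ℝ × EuclideanSpace ℝ (Fin d),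
          (ρf z.1 * ENNReal.ofReal ((max z.1 1) ^ (q / 2))) *
            (Gf z.2 * ENNReal.ofReal ((1 + ‖z.2‖) ^ q))
          ∂((volume.restrict (Set.Ioi (0:ℝ))).prod volume)) * N :=
        lintegral_mul_const' N _ hNlt.ne
    _ = ((∫⁻ t in Set.Ioi (0:ℝ), ρf t * ENNReal.ofReal ((max t 1) ^ (q / 2))) *
          (∫⁻ y, Gf y * ENNReal.ofReal ((1 + ‖y‖) ^ q))) * N := by
        rw [lintegral_prod_mul haem1 haem2]
    _ = (∫⁻ t in Set.Ioi (0:ℝ), ENNReal.ofReal ((max t 1) ^ (q / 2) *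
          (t ^ (-(1 : ℝ) / 2) * Real.sqrt (θ' / Real.pi) * Real.exp (-θ' * t)))) *
        (∫⁻ y, ENNReal.ofReal ((1 + ‖y‖) ^ q) ∂γ) * (∫⁻ x, gf x ∂M) := by
        rw [hAeq, hBeq, hIeq]
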